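/- arXiv:2304.08314 — 4 statements merged into one kernel-verified Lean document; each statement's English description precedes it below -/
import Mathlib

section
/- If R is a subquandle of Q, then the induced monoid homomorphism 𝒜_R → 𝒜_Q between enveloping monoids is injective. -/
open Quandles

/-- The defining relation of the enveloping monoid of a quandle. -/
def envRel (Q : Type*) [Quandle Q] : FreeMonoid Q → FreeMonoid Q → Prop :=
  fun a b => ∃ x y : Q,
    a = FreeMonoid.of x * FreeMonoid.of y ∧
    b = FreeMonoid.of (x ◃ y) * FreeMonoid.of x

/-- The enveloping monoid `𝒜_Q` of a quandle `Q`. -/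
abbrev envMonoid (Q : Type*) [Quandle Q] : Type _ :=
  (conGen (envRel Q)).Quotient

/-- The canonical generator `x ∈ Q ⊆ 𝒜_Q`. -/
def envMk (Q : Type*) [Quandle Q] (x : Q) : envMonoid Q :=
  (conGen (envRel Q)).mk' (FreeMonoid.of x)

section Aux

variable {R Q : Type*} [Quandle R] [Quandle Q] (ι : R →◃ Q)

/-- A shelf hom between racks commutes with the inverse action, provided it is
injective. -/
lemma aux_map_invAct (hι : Function.Injective ι) (x y : R) :
    ι (x ◃⁻¹ y) = (ι x : Q) ◃⁻¹ ι y := by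
  have h : (ι x : Q) ◃ ι (x ◃⁻¹ y) = (ι x : Q) ◃ ((ι x : Q) ◃⁻¹ ι y) := by
    rw [Rack.right_inv, ← ι.map_act, Rack.right_inv]
  exact (Rack.left_cancel (ι x)).mp h

/-- Splitting preimages of products under `FreeMonoid.map`. -/
lemma aux_split {u : FreeMonoid R} {w₁ w₂ : FreeMonoid Q}
    (h : FreeMonoid.map ι u = w₁ * w₂) :
    ∃ u₁ u₂ : FreeMonoid R, u = u₁ * u₂ ∧
      FreeMonoid.map ι u₁ = w₁ ∧ FreeMonoid.map ι u₂ = w₂ := by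
  have h' : List.map ι u.toList = w₁.toList ++ w₂.toList := by
    have := congrArg FreeMonoid.toList h
    rwa [FreeMonoid.toList_mul] at this
  rcases List.map_eq_append_iff.mp h' with ⟨l₁, l₂, hl, h1, h2⟩
  refine ⟨FreeMonoid.ofList l₁, FreeMonoid.ofList l₂, ?_, ?_, ?_⟩
  · apply FreeMonoid.toList.injective
    simpa [FreeMonoid.toList_mul] using hl
  · apply FreeMonoid.toList.injective
    simpa using h1
  · apply FreeMonoid.toList.injective
    simpa using h2

/-- `FreeMonoid.map` of an injective map is injective. -/
lemma aux_map_inj (hι : Function.Injective ι) :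
    Function.Injective (FreeMonoid.map (ι : R → Q)) := by
  intro u v h
  apply FreeMonoid.toList.injective
  have : List.map ι u.toList = List.map ι v.toList := congrArg FreeMonoid.toList h
  exact List.map_injective_iff.mpr hι this


/-- Preimages of single-letter words under `FreeMonoid.map` are single letters. -/
lemma aux_single {u : FreeMonoid R} {x : Q}
    (h : FreeMonoid.map ι u = FreeMonoid.of x) :
    ∃ a : R, u = FreeMonoid.of a ∧ (ι a : Q) = x := by
  have h' : List.map (⇑ι) u.toList = [x] := congrArg FreeMonoid.toList h
  cases hl : u.toList with
  | nil => rw [hl] at h'; simp at h'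
  | cons a l =>
    rw [hl] at h'
    simp only [List.map_cons, List.cons.injEq] at h'
    obtain ⟨h1, h2⟩ := h'
    have hnil : l = [] := List.map_eq_nil_iff.mp h2
    exact ⟨a, FreeMonoid.toList.injective (by simp [hl, hnil]), h1⟩

/-- The key transport congruence on `FreeMonoid Q`. -/
def auxCon (hι : Function.Injective ι) : Con (FreeMonoid Q) where
  r w w' :=
    (∀ u : FreeMonoid R, FreeMonoid.map ι u = w →
      ∃ v : FreeMonoid R, FreeMonoid.map ι v = w' ∧ conGen (envRel R) u v) ∧
    (∀ v : FreeMonoid R, FreeMonoid.map ι v = w' →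
      ∃ u : FreeMonoid R, FreeMonoid.map ι u = w ∧ conGen (envRel R) u v)
  iseqv := by
    constructor
    · intro w
      exact ⟨fun u hu => ⟨u, hu, (conGen (envRel R)).refl u⟩,
             fun v hv => ⟨v, hv, (conGen (envRel R)).refl v⟩⟩
    · rintro w w' ⟨h1, h2⟩
      exact ⟨fun u hu => (h2 u hu).imp (fun v hv => ⟨hv.1, (conGen (envRel R)).symm hv.2⟩),
             fun v hv => (h1 v hv).imp (fun u hu => ⟨hu.1, (conGen (envRel R)).symm hu.2⟩)⟩
    · rintro w₁ w₂ w₃ ⟨h1, h2⟩ ⟨h3, h4⟩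
      constructor
      · intro u hu
        obtain ⟨v, hv, huv⟩ := h1 u hu
        obtain ⟨t, ht, hvt⟩ := h3 v hv
        exact ⟨t, ht, (conGen (envRel R)).trans huv hvt⟩
      · intro t ht
        obtain ⟨v, hv, hvt⟩ := h4 t ht
        obtain ⟨u, hu, huv⟩ := h2 v hv
        exact ⟨u, hu, (conGen (envRel R)).trans huv hvt⟩
  mul' := by
    rintro w₁ w₂ w₁' w₂' ⟨h1, h2⟩ ⟨h3, h4⟩
    constructor
    · intro u hu
      obtain ⟨u₁, u₂, rfl, hu1, hu2⟩ := aux_split ι hu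
      obtain ⟨v₁, hv1, h1'⟩ := h1 u₁ hu1
      obtain ⟨v₂, hv2, h2'⟩ := h3 u₂ hu2
      exact ⟨v₁ * v₂, by rw [map_mul, hv1, hv2], (conGen (envRel R)).mul h1' h2'⟩
    · intro v hv
      obtain ⟨v₁, v₂, rfl, hv1, hv2⟩ := aux_split ι hv
      obtain ⟨u₁, hu1, h1'⟩ := h2 v₁ hv1
      obtain ⟨u₂, hu2, h2'⟩ := h4 v₂ hv2
      exact ⟨u₁ * u₂, by rw [map_mul, hu1, hu2], (conGen (envRel R)).mul h1' h2'⟩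

lemma aux_conGen_le (hι : Function.Injective ι) :
    conGen (envRel Q) ≤ auxCon ι hι := by
  apply Con.conGen_le.mpr
  rintro w w' ⟨x, y, rfl, rfl⟩
  constructor
  · intro u hu
    obtain ⟨u₁, u₂, rfl, hu1, hu2⟩ := aux_split ι hu
    obtain ⟨a, rfl, ha⟩ := aux_single ι hu1
    obtain ⟨b, rfl, hb⟩ := aux_single ι hu2
    refine ⟨FreeMonoid.of (a ◃ b) * FreeMonoid.of a, ?_, ?_⟩
    · rw [map_mul, FreeMonoid.map_of, FreeMonoid.map_of, ι.map_act, ha, hb]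
    · exact ConGen.Rel.of _ _ ⟨a, b, rfl, rfl⟩
  · intro v hv
    obtain ⟨v₁, v₂, rfl, hv1, hv2⟩ := aux_split ι hv
    obtain ⟨c, rfl, hc⟩ := aux_single ι hv1
    obtain ⟨d, rfl, hd⟩ := aux_single ι hv2
    refine ⟨FreeMonoid.of d * FreeMonoid.of (d ◃⁻¹ c), ?_, ?_⟩
    · rw [map_mul, FreeMonoid.map_of, FreeMonoid.map_of, aux_map_invAct ι hι, hc, hd,
        Rack.invAct_act_eq]
    · have key : envRel R (FreeMonoid.of d * FreeMonoid.of (d ◃⁻¹ c))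
          (FreeMonoid.of (d ◃ d ◃⁻¹ c) * FreeMonoid.of d) := ⟨d, d ◃⁻¹ c, rfl, rfl⟩
      have := ConGen.Rel.of _ _ key
      rwa [Rack.act_invAct_eq] at this

end Aux

/-- If `R` is a subquandle of `Q` (i.e. `ι : R → Q` is an injective quandle
morphism), then the induced monoid homomorphism `𝒜_R → 𝒜_Q` between enveloping
monoids is injective. -/
theorem stmt11 {R Q : Type*} [Quandle R] [Quandle Q] (ι : R →◃ Q)
    (hι : Function.Injective ι)
    (g : envMonoid R →* envMonoid Q)
    (hg : ∀ x : R, g (envMk R x) = envMk Q (ι x)) :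
    Function.Injective g := by
  have hcomp : g.comp (conGen (envRel R)).mk' =
      (conGen (envRel Q)).mk'.comp (FreeMonoid.map ι) := by
    apply FreeMonoid.hom_eq
    intro x
    simpa [envMk, FreeMonoid.map_of] using hg x
  intro a b hab
  obtain ⟨u, rfl⟩ := Con.mk'_surjective (c := conGen (envRel R)) a
  obtain ⟨v, rfl⟩ := Con.mk'_surjective (c := conGen (envRel R)) b
  have h1 : (conGen (envRel Q)).mk' (FreeMonoid.map ι u) =
      (conGen (envRel Q)).mk' (FreeMonoid.map ι v) := by
    have hu := DFunLike.congr_fun hcomp u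
    have hv := DFunLike.congr_fun hcomp v
    simp only [MonoidHom.comp_apply] at hu hv
    rw [← hu, ← hv, hab]
  have h2 : (conGen (envRel Q)) (FreeMonoid.map ι u) (FreeMonoid.map ι v) :=
    (Con.eq _).mp h1
  have h3 := Con.le_def.mp (aux_conGen_le ι hι) h2
  obtain ⟨v', hv', huv'⟩ := h3.1 u rfl
  have : v' = v := aux_map_inj ι hι hv'
  subst this
  exact (Con.eq _).mpr huv'
end

section
/- In the enveloping monoid of a finite quandle Q, the submonoid of saturated elements corresponding to a subquandle R is saturated: if a, b ∈ 𝒜_Q and a·b ∈ 𝒜_R, then a ∈ 𝒜_R and b ∈ 𝒜_R. -/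
open Quandles

/-- For a subset `S ⊆ Q`, the subset `𝒜_S ⊆ 𝒜_Q` of elements represented by
words all of whose letters lie in `S`. -/
def envSub (Q : Type*) [Quandle Q] (S : Set Q) : Set (envMonoid Q) :=
  { a | ∃ l : List Q, (∀ x ∈ l, x ∈ S) ∧
      a = (conGen (envRel Q)).mk' (FreeMonoid.ofList l) }

/-- In a finite quandle, if `x ∈ S`, `S` is `◃`-closed and `x ◃ y ∈ S`, then `y ∈ S`. -/
lemma mem_of_act_mem {Q : Type*} [Quandle Q] [Finite Q] (S : Set Q)
    (hS : ∀ x ∈ S, ∀ y ∈ S, x ◃ y ∈ S) {x y : Q} (hx : x ∈ S) (hxy : x ◃ y ∈ S) :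
    y ∈ S := by
  have hmaps : Set.MapsTo (fun z => x ◃ z) S S := fun z hz => hS x hx z hz
  have hinj : Set.InjOn (fun z => x ◃ z) S :=
    Set.injOn_of_injective (fun a b hab => by
      have := congrArg (fun w => x ◃⁻¹ w) hab
      simpa [Rack.invAct_act_eq] using this)
  have hbij : Set.BijOn (fun z => x ◃ z) S S :=
    ((Set.toFinite S).injOn_iff_bijOn_of_mapsTo hmaps).mp hinj
  obtain ⟨z, hz, hz'⟩ := hbij.surjOn hxy
  have : z = y := by
    have := congrArg (fun w => x ◃⁻¹ w) hz'
    simpa [Rack.invAct_act_eq] using this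
  exact this ▸ hz

/-- The property "all letters lie in `S`" is invariant under the congruence. -/
lemma letters_invariant {Q : Type*} [Quandle Q] [Finite Q] (S : Set Q)
    (hS : ∀ x ∈ S, ∀ y ∈ S, x ◃ y ∈ S) {a b : FreeMonoid Q}
    (h : ConGen.Rel (envRel Q) a b) :
    (∀ x ∈ FreeMonoid.toList a, x ∈ S) ↔ (∀ x ∈ FreeMonoid.toList b, x ∈ S) := by
  induction h with
  | of a b hab =>
      obtain ⟨x, y, rfl, rfl⟩ := hab
      constructor
      · intro hmem z hz
        have hx : x ∈ S := hmem x (by simp [FreeMonoid.toList_of])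
        have hy : y ∈ S := hmem y (by simp [FreeMonoid.toList_of])
        rcases (by simpa [FreeMonoid.toList_of] using hz : z = x ◃ y ∨ z = x) with rfl | rfl
        · exact hS x hx y hy
        · exact hx
      · intro hmem z hz
        have hxy : x ◃ y ∈ S := hmem (x ◃ y) (by simp [FreeMonoid.toList_of])
        have hx : x ∈ S := hmem x (by simp [FreeMonoid.toList_of])
        rcases (by simpa [FreeMonoid.toList_of] using hz : z = x ∨ z = y) with rfl | rfl
        · exact hx
        · exact mem_of_act_mem S hS hx hxy
  | refl a => rfl
  | symm _ ih => exact ih.symm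
  | trans _ _ ih₁ ih₂ => exact ih₁.trans ih₂
  | mul _ _ ih₁ ih₂ =>
      constructor
      · intro hmem z hz
        rw [FreeMonoid.toList_mul, List.mem_append] at hz
        rcases hz with hz | hz
        · exact ih₁.mp (fun u hu => hmem u (by rw [FreeMonoid.toList_mul]; exact List.mem_append_left _ hu)) z hz
        · exact ih₂.mp (fun u hu => hmem u (by rw [FreeMonoid.toList_mul]; exact List.mem_append_right _ hu)) z hz
      · intro hmem z hz
        rw [FreeMonoid.toList_mul, List.mem_append] at hz
        rcases hz with hz | hz
        · exact ih₁.mpr (fun u hu => hmem u (by rw [FreeMonoid.toList_mul]; exact List.mem_append_left _ hu)) z hz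
        · exact ih₂.mpr (fun u hu => hmem u (by rw [FreeMonoid.toList_mul]; exact List.mem_append_right _ hu)) z hz

/-- In the enveloping monoid of a finite quandle `Q`, the submonoid `𝒜_R`
corresponding to a subquandle `R ≤ Q` is saturated: if `a, b ∈ 𝒜_Q` and
`a·b ∈ 𝒜_R`, then `a ∈ 𝒜_R` and `b ∈ 𝒜_R`. -/
theorem stmt12 {Q : Type*} [Quandle Q] [Finite Q] (S : Set Q)
    (hS : ∀ x ∈ S, ∀ y ∈ S, x ◃ y ∈ S)
    (a b : envMonoid Q) (h : a * b ∈ envSub Q S) :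
    a ∈ envSub Q S ∧ b ∈ envSub Q S := by
  obtain ⟨wa, rfl⟩ := Con.mk'_surjective a
  obtain ⟨wb, rfl⟩ := Con.mk'_surjective b
  obtain ⟨l, hl, heq⟩ := h
  rw [← MonoidHom.map_mul] at heq
  have hrel : ConGen.Rel (envRel Q) (wa * wb) (FreeMonoid.ofList l) := Con.eq _ |>.mp heq
  have hP : ∀ x ∈ FreeMonoid.toList (wa * wb), x ∈ S := by
    have := (letters_invariant S hS hrel).mpr
    exact this (by simpa using hl)
  rw [FreeMonoid.toList_mul] at hP
  constructor
  · exact ⟨FreeMonoid.toList wa, fun x hx => hP x (List.mem_append_left _ hx), by simp⟩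
  · exact ⟨FreeMonoid.toList wb, fun x hx => hP x (List.mem_append_right _ hx), by simp⟩
end

section
/- For a finite quandle Q with exponent N = exp_Q (the smallest positive integer with φ_x^N = Id on 𝒜_Q for all x ∈ Q), the element x^N lies in the center of the enveloping monoid 𝒜_Q for every x ∈ Q. -/
open Quandles

lemma envMk_rel {Q : Type*} [Quandle Q] (x y : Q) :
    envMk Q x * envMk Q y = envMk Q (x ◃ y) * envMk Q x := by
  exact Quotient.sound (ConGen.Rel.of _ _ ⟨x, y, rfl, rfl⟩)

lemma envMk_pow_mul {Q : Type*} [Quandle Q] (x y : Q) (n : ℕ) :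
    envMk Q x ^ n * envMk Q y = envMk Q ((fun z => x ◃ z)^[n] y) * envMk Q x ^ n := by
  induction n generalizing y with
  | zero => simp
  | succ n ih =>
    rw [pow_succ, mul_assoc, envMk_rel, ← mul_assoc, ih (x ◃ y), mul_assoc, ← pow_succ,
      Function.iterate_succ_apply]

/-- For a finite quandle `Q` with exponent `N = exp_Q` (the smallest positive
integer such that `φ_x^N = Id` for all `x ∈ Q`, equivalently on `𝒜_Q` since the
conjugation automorphisms of `𝒜_Q` extend the quandle action and `𝒜_Q` is
generated by `Q`), the element `x^N` is central in the enveloping monoid `𝒜_Q`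
for every `x ∈ Q`. -/
theorem stmt13 {Q : Type*} [Quandle Q] [Finite Q] (N : ℕ) (hNpos : 0 < N)
    (hN : ∀ x y : Q, (fun z => x ◃ z)^[N] y = y)
    (hmin : ∀ M : ℕ, 0 < M → (∀ x y : Q, (fun z => x ◃ z)^[M] y = y) → N ≤ M)
    (x : Q) (a : envMonoid Q) :
    (envMk Q x) ^ N * a = a * (envMk Q x) ^ N := by
  induction a using Con.induction_on with
  | H w =>
    induction w using FreeMonoid.recOn with
    | one => simp
    | of_mul y w ih =>
      have h1 : ((FreeMonoid.of y * w : FreeMonoid Q) : envMonoid Q)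
          = envMk Q y * (w : envMonoid Q) := rfl
      rw [h1, ← mul_assoc, envMk_pow_mul, hN, mul_assoc, ih, ← mul_assoc]
end

section
/- For finite nonempty quandles Q and R, the natural map π₀(Q × R) → π₀(Q) × π₀(R) induced by the projections is a bijection. -/
open Quandles

/-- The product quandle: `(x,y) ◃ (x',y') = (x ◃ x', y ◃ y')`. -/
instance prodQuandle {Q R : Type*} [Quandle Q] [Quandle R] : Quandle (Q × R) where
  act a b := (a.1 ◃ b.1, a.2 ◃ b.2)
  self_distrib {x y z} := by
    simp only [Prod.mk.injEq]
    exact ⟨Shelf.self_distrib, Shelf.self_distrib⟩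
  invAct a b := (a.1 ◃⁻¹ b.1, a.2 ◃⁻¹ b.2)
  left_inv a b := by
    simp [Rack.invAct_act_eq]
  right_inv a b := by
    simp [Rack.act_invAct_eq]
  fix {x} := by
    simp [Quandle.fix]

/-- The relation generating the connected-components equivalence: `x ◃ y ∼ y`. -/
def quandleCompRel (Q : Type*) [Quandle Q] : Q → Q → Prop :=
  fun a b => ∃ x : Q, x ◃ b = a

/-- `π₀(Q)`: the set of connected components of a quandle. -/
def pi0 (Q : Type*) [Quandle Q] : Type _ :=
  Quot (quandleCompRel Q)

lemma prod_act_def {Q R : Type*} [Quandle Q] [Quandle R] (a b : Q × R) :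
    a ◃ b = (a.1 ◃ b.1, a.2 ◃ b.2) := rfl

/-- For finite nonempty quandles `Q` and `R`, the natural map
`π₀(Q × R) → π₀(Q) × π₀(R)` induced by the projections is a bijection. -/
theorem stmt18 {Q R : Type*} [Quandle Q] [Quandle R] [Finite Q] [Finite R]
    [Nonempty Q] [Nonempty R] :
    ∃ e : pi0 (Q × R) ≃ pi0 Q × pi0 R,
      ∀ p : Q × R,
        e (Quot.mk (quandleCompRel (Q × R)) p) =
          (Quot.mk (quandleCompRel Q) p.1, Quot.mk (quandleCompRel R) p.2) := by
  have hf : ∀ p₁ p₂ : Q × R, quandleCompRel (Q × R) p₁ p₂ →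
      (Quot.mk (quandleCompRel Q) p₁.1, Quot.mk (quandleCompRel R) p₁.2)
        = (Quot.mk (quandleCompRel Q) p₂.1, Quot.mk (quandleCompRel R) p₂.2) := by
    rintro p₁ p₂ ⟨x, hx⟩
    rw [prod_act_def] at hx
    refine Prod.ext ?_ ?_
    · exact Quot.sound ⟨x.1, congrArg Prod.fst hx⟩
    · exact Quot.sound ⟨x.2, congrArg Prod.snd hx⟩
  refine ⟨{
    toFun := Quot.lift
      (fun p => (Quot.mk (quandleCompRel Q) p.1, Quot.mk (quandleCompRel R) p.2))
      hf
    invFun := fun q => Quot.lift₂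
      (fun a b => Quot.mk (quandleCompRel (Q × R)) (a, b))
      (by
        rintro a b₁ b₂ ⟨y, hy⟩
        exact Quot.sound ⟨(a, y), by rw [prod_act_def]; simp [Quandle.fix, hy]⟩)
      (by
        rintro a₁ a₂ b ⟨x, hx⟩
        exact Quot.sound ⟨(x, b), by rw [prod_act_def]; simp [Quandle.fix, hx]⟩)
      q.1 q.2
    left_inv := by
      refine Quot.ind ?_
      intro p
      rfl
    right_inv := by
      rintro ⟨qa, qb⟩
      induction qa using Quot.ind with
      | _ a =>
        induction qb using Quot.ind with
        | _ b => rfl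
  }, fun p => rfl⟩
end
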